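/- For every constant C with 2√2/3 < C < √2, the open disc {w ∈ ℂ : |w - C| < √2 - C} is contained in the lemniscate region {w ∈ ℂ : |w² - 1| < 1}. -/

import Mathlib

open Complex

theorem stmt_6 (C : ℝ) (h1 : 2 * Real.sqrt 2 / 3 < C) (h2 : C < Real.sqrt 2) :
    ∀ w : ℂ, ‖w - (C:ℂ)‖ < Real.sqrt 2 - C →
      ‖w ^ 2 - 1‖ < 1 := by
  intro w hw
  set s := Real.sqrt 2 with hsdef
  have hs2 : s ^ 2 = 2 := Real.sq_sqrt (by norm_num)
  have hs2pos : (0:ℝ) < s := Real.sqrt_pos.2 (by norm_num)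
  have hC0 : (0:ℝ) < C := by nlinarith
  have hrpos : (0:ℝ) < s - C := by linarith
  set x := w.re with hxdef
  set y := w.im with hydef
  have hw2 : (x - C)^2 + y^2 < (s - C)^2 := by
    have h := mul_self_lt_mul_self (norm_nonneg _) hw
    rw [← sq, ← sq, Complex.sq_norm, Complex.normSq_apply] at h
    simpa [Complex.sub_re, Complex.sub_im, sq] using h
  have hx : x < s := by nlinarith [sq_nonneg y]
  have hx2 : 2*C - s < x := by nlinarith [sq_nonneg y]
  have hup : x^2 + y^2 + 1 < 3 - 2*s*C + 2*C*x := by nlinarith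
  have key : (2*s - 2*C)*(1 + 4*x^2 - (3 - 2*s*C + 2*C*x)^2)
      = (s-x)^2*(4*C*(s*C-1)^2) + (s-x)*(x-2*C+s)*(4*(3*C-2*s)) := by
    linear_combination (-4*s^2*C^3 + 8*s*C^3*x + 8*s - 8*C - 4*C^3*x^2) * hs2
  have hnn1 : (0:ℝ) ≤ (s-x)^2*(4*C*(s*C-1)^2) := by positivity
  have hnn2 : (0:ℝ) ≤ (s-x)*(x-2*C+s)*(4*(3*C-2*s)) := by
    apply mul_nonneg (mul_nonneg (by linarith) (by linarith))
    nlinarith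
  have hq : (3 - 2*s*C + 2*C*x)^2 ≤ 1 + 4*x^2 := by nlinarith [key, hnn1, hnn2, hrpos]
  have hupos : (0:ℝ) < x^2 + y^2 + 1 := by positivity
  have hns : Complex.normSq (w^2 - 1) < 1 := by
    have key2 : (x^2 + y^2 + 1)^2 < 1 + 4*x^2 := by
      nlinarith [mul_self_lt_mul_self hupos.le hup]
    have heq : Complex.normSq (w^2 - 1) = (x^2 + y^2 + 1)^2 - 4*x^2 := by
      simp [Complex.normSq_apply, pow_two, Complex.mul_re, Complex.mul_im,
        Complex.sub_re, Complex.sub_im, ← hxdef, ← hydef]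
      ring
    rw [heq]; linarith
  calc ‖w^2 - 1‖ = Real.sqrt (Complex.normSq (w^2-1)) := rfl
    _ < 1 := by
        rw [show (1:ℝ) = Real.sqrt 1 by simp]
        exact Real.sqrt_lt_sqrt (Complex.normSq_nonneg _) (by simpa using hns)
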